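/- arXiv:1405.0356 — 3 statements merged into one kernel-verified Lean document; each statement's English description precedes it below -/
import Mathlib

section
/- Identify ℂ[[z^{−1}]] with the ring ℂ[[X]] of formal power series in one variable via X = z^{−1}, and let ∂ : ℂ[[X]] → ℂ[[X]] be the derivation ∂φ := −X²·(dφ/dX) (corresponding to d/dz). Then for every χ, ψ ∈ ℂ[[X]] and every integer n ≥ 1, Σ_{k=0}^{n} (−1)^k·binom(n,k)·χ^{n−k}·∂^{n−1}(χ^k·ψ) = 0. -/
/-- The derivative `d/dX` of a formal power series. -/
noncomputable def dX (φ : PowerSeries ℂ) : PowerSeries ℂ :=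
  PowerSeries.mk fun n => ((n : ℂ) + 1) * PowerSeries.coeff (n + 1) φ

/-- The derivation `∂ = d/dz` on `ℂ[[z⁻¹]] ≅ ℂ[[X]]` (with `X = z⁻¹`): `∂φ = −X²·φ'`. -/
noncomputable def pd (φ : PowerSeries ℂ) : PowerSeries ℂ :=
  -(PowerSeries.X ^ 2 * dX φ)

open PowerSeries in
lemma dX_eq (φ : PowerSeries ℂ) : dX φ = derivative ℂ φ := by
  ext n
  simp [dX, coeff_derivative, mul_comm]

lemma pd_add (a b : PowerSeries ℂ) : pd (a + b) = pd a + pd b := by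
  simp [pd, dX_eq, map_add]; ring

lemma pd_smul (c : ℂ) (a : PowerSeries ℂ) : pd (c • a) = c • pd a := by
  rw [pd, pd, dX_eq, dX_eq, Derivation.map_smul]
  simp only [PowerSeries.smul_eq_C_mul]; ring

lemma pd_mul (a b : PowerSeries ℂ) : pd (a * b) = a * pd b + pd a * b := by
  have h := (PowerSeries.derivative ℂ).leibniz a b
  simp only [pd, dX_eq, h, smul_eq_mul]; ring

lemma pd_sum {ι : Type*} (s : Finset ι) (f : ι → PowerSeries ℂ) :
    pd (∑ i ∈ s, f i) = ∑ i ∈ s, pd (f i) := by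
  classical
  induction s using Finset.induction with
  | empty => simp [pd, dX_eq]
  | insert _ _ h ih => simp [Finset.sum_insert h, pd_add, ih]

lemma pd_iter_mul (a b : PowerSeries ℂ) (m : ℕ) :
    pd^[m] (a * b) =
      ∑ j ∈ Finset.range (m + 1), (m.choose j : ℂ) • (pd^[j] a * pd^[m - j] b) := by
  induction m with
  | zero => simp
  | succ m ih =>
    have step : pd^[m + 1] (a * b) =
        (∑ j ∈ Finset.range (m + 1), (m.choose j : ℂ) • (pd^[j] a * pd^[m + 1 - j] b)) +
          ∑ j ∈ Finset.range (m + 1), (m.choose j : ℂ) • (pd^[j + 1] a * pd^[m - j] b) := by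
      rw [Function.iterate_succ_apply', ih, pd_sum, ← Finset.sum_add_distrib]
      refine Finset.sum_congr rfl fun j hj => ?_
      have hjm : j ≤ m := by simpa [Nat.lt_succ_iff] using hj
      have h1 : m + 1 - j = (m - j) + 1 := by omega
      rw [pd_smul, pd_mul, h1, Function.iterate_succ_apply', Function.iterate_succ_apply',
        smul_add]
    rw [step]
    -- now compute the RHS
    rw [Finset.sum_range_succ' (fun j => ((m + 1).choose j : ℂ) • (pd^[j] a * pd^[m + 1 - j] b))
      (m + 1)]
    have pascal : ∀ j, (((m + 1).choose (j + 1) : ℕ) : ℂ)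
        = (m.choose j : ℂ) + (m.choose (j + 1) : ℂ) := by
      intro j
      rw [Nat.choose_succ_succ]
      push_cast
      ring
    have hsplit : ∀ j ∈ Finset.range (m + 1),
        ((m + 1).choose (j + 1) : ℂ) • (pd^[j + 1] a * pd^[m + 1 - (j + 1)] b)
          = (m.choose (j + 1) : ℂ) • (pd^[j + 1] a * pd^[m - j] b)
            + (m.choose j : ℂ) • (pd^[j + 1] a * pd^[m - j] b) := by
      intro j hj
      have : m + 1 - (j + 1) = m - j := by omega
      rw [this, pascal, add_smul]
      ring
    rw [Finset.sum_congr rfl hsplit, Finset.sum_add_distrib]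
    have hS1 : (∑ j ∈ Finset.range (m + 1), (m.choose j : ℂ) • (pd^[j] a * pd^[m + 1 - j] b))
        = (∑ j ∈ Finset.range (m + 1), (m.choose (j + 1) : ℂ) • (pd^[j + 1] a * pd^[m - j] b))
          + ((m + 1).choose 0 : ℂ) • (pd^[0] a * pd^[m + 1 - 0] b) := by
      have := Finset.sum_range_succ'
        (fun j => (m.choose j : ℂ) • (pd^[j] a * pd^[m + 1 - j] b)) (m + 1)
      rw [Finset.sum_range_succ] at this
      simp only [Nat.choose_succ_self, Nat.cast_zero, zero_smul, add_zero] at this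
      rw [this]
      congr 1
      · refine Finset.sum_congr rfl fun j hj => ?_
        have : m + 1 - (j + 1) = m - j := by omega
        rw [this]
      · simp
    rw [hS1]
    ring

lemma swap_pt (a b : ℂ) (u v w : PowerSeries ℂ) :
    a • (u * (b • (v * w))) = b • (v * (a • (u * w))) := by
  simp only [PowerSeries.smul_eq_C_mul]; ring

lemma swap_pt2 (a b : ℂ) (u v w : PowerSeries ℂ) :
    a • (u * (b • (v * w))) = b • ((a • (u * v)) * w) := by
  simp only [PowerSeries.smul_eq_C_mul]; ring

lemma key (χ : PowerSeries ℂ) (n : ℕ) :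
    ∀ j, j < n →
      ∑ k ∈ Finset.range (n + 1),
          ((-1 : ℂ) ^ k * (n.choose k : ℂ)) • (χ ^ (n - k) * pd^[j] (χ ^ k)) = 0 := by
  induction n with
  | zero => intro j hj; exact absurd hj (Nat.not_lt_zero j)
  | succ n ih =>
    intro j hj
    have hjn : j ≤ n := Nat.lt_succ_iff.mp hj
    have hχS : ∀ j' : ℕ,
        χ * ∑ k ∈ Finset.range (n + 1),
            ((-1 : ℂ) ^ k * (n.choose k : ℂ)) • (χ ^ (n - k) * pd^[j'] (χ ^ k))
          = ∑ k ∈ Finset.range (n + 1),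
              ((-1 : ℂ) ^ k * (n.choose k : ℂ)) • (χ ^ (n + 1 - k) * pd^[j'] (χ ^ k)) := by
      intro j'
      rw [Finset.mul_sum]
      refine Finset.sum_congr rfl fun k hk => ?_
      have hk' : k ≤ n := Nat.lt_succ_iff.mp (Finset.mem_range.mp hk)
      have h1 : n + 1 - k = (n - k) + 1 := by omega
      rw [h1, pow_succ', mul_smul_comm, mul_assoc]
    have step1 : ∑ k ∈ Finset.range (n + 2),
          ((-1 : ℂ) ^ k * ((n + 1).choose k : ℂ)) • (χ ^ (n + 1 - k) * pd^[j] (χ ^ k))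
        = (∑ k ∈ Finset.range (n + 2),
              ((-1 : ℂ) ^ k * (n.choose k : ℂ)) • (χ ^ (n + 1 - k) * pd^[j] (χ ^ k)))
          - ∑ k ∈ Finset.range (n + 1),
              ((-1 : ℂ) ^ k * (n.choose k : ℂ)) • (χ ^ (n - k) * pd^[j] (χ ^ (k + 1))) := by
      rw [Finset.sum_range_succ'
        (fun k => ((-1 : ℂ) ^ k * ((n + 1).choose k : ℂ)) • (χ ^ (n + 1 - k) * pd^[j] (χ ^ k)))
        (n + 1),
        Finset.sum_range_succ'
        (fun k => ((-1 : ℂ) ^ k * (n.choose k : ℂ)) • (χ ^ (n + 1 - k) * pd^[j] (χ ^ k)))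
        (n + 1)]
      rw [add_sub_right_comm, ← Finset.sum_sub_distrib]
      congr 1
      · refine Finset.sum_congr rfl fun k hk => ?_
        have h1 : n + 1 - (k + 1) = n - k := by omega
        rw [h1, ← sub_smul]
        congr 1
        rw [Nat.choose_succ_succ]
        push_cast
        ring
      · simp
    have step2 : ∑ k ∈ Finset.range (n + 1),
          ((-1 : ℂ) ^ k * (n.choose k : ℂ)) • (χ ^ (n - k) * pd^[j] (χ ^ (k + 1)))
        = χ * ∑ k ∈ Finset.range (n + 1),
            ((-1 : ℂ) ^ k * (n.choose k : ℂ)) • (χ ^ (n - k) * pd^[j] (χ ^ k)) := by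
      calc ∑ k ∈ Finset.range (n + 1),
              ((-1 : ℂ) ^ k * (n.choose k : ℂ)) • (χ ^ (n - k) * pd^[j] (χ ^ (k + 1)))
          = ∑ k ∈ Finset.range (n + 1), ∑ i ∈ Finset.range (j + 1),
              (j.choose i : ℂ) • (pd^[i] χ *
                (((-1 : ℂ) ^ k * (n.choose k : ℂ)) • (χ ^ (n - k) * pd^[j - i] (χ ^ k)))) := by
            refine Finset.sum_congr rfl fun k _ => ?_
            rw [pow_succ', pd_iter_mul, Finset.mul_sum, Finset.smul_sum]
            exact Finset.sum_congr rfl fun i _ => swap_pt _ _ _ _ _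
        _ = ∑ i ∈ Finset.range (j + 1),
              (j.choose i : ℂ) • (pd^[i] χ *
                ∑ k ∈ Finset.range (n + 1),
                  ((-1 : ℂ) ^ k * (n.choose k : ℂ)) • (χ ^ (n - k) * pd^[j - i] (χ ^ k))) := by
            rw [Finset.sum_comm]
            refine Finset.sum_congr rfl fun i _ => ?_
            rw [Finset.mul_sum, Finset.smul_sum]
        _ = χ * ∑ k ∈ Finset.range (n + 1),
              ((-1 : ℂ) ^ k * (n.choose k : ℂ)) • (χ ^ (n - k) * pd^[j] (χ ^ k)) := by
            rw [Finset.sum_range_succ'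
              (fun i => (j.choose i : ℂ) • (pd^[i] χ *
                ∑ k ∈ Finset.range (n + 1),
                  ((-1 : ℂ) ^ k * (n.choose k : ℂ)) • (χ ^ (n - k) * pd^[j - i] (χ ^ k)))) j]
            have hz : ∀ i ∈ Finset.range j,
                (j.choose (i + 1) : ℂ) • (pd^[i + 1] χ *
                  ∑ k ∈ Finset.range (n + 1),
                    ((-1 : ℂ) ^ k * (n.choose k : ℂ)) •
                      (χ ^ (n - k) * pd^[j - (i + 1)] (χ ^ k))) = 0 := by
              intro i hi
              have hilt : i < j := Finset.mem_range.mp hi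
              have : j - (i + 1) < n := by omega
              rw [ih _ this, mul_zero, smul_zero]
            rw [Finset.sum_eq_zero hz, zero_add]
            simp only [Nat.choose_zero_right, Nat.cast_one, one_smul,
              Function.iterate_zero, id_eq, Nat.sub_zero]
        _ = _ := rfl
    have step3 : ∑ k ∈ Finset.range (n + 2),
          ((-1 : ℂ) ^ k * (n.choose k : ℂ)) • (χ ^ (n + 1 - k) * pd^[j] (χ ^ k))
        = χ * ∑ k ∈ Finset.range (n + 1),
            ((-1 : ℂ) ^ k * (n.choose k : ℂ)) • (χ ^ (n - k) * pd^[j] (χ ^ k)) := by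
      rw [Finset.sum_range_succ, Nat.choose_succ_self, Nat.cast_zero, mul_zero, zero_smul,
        add_zero, hχS]
    show ∑ k ∈ Finset.range (n + 1 + 1),
        ((-1 : ℂ) ^ k * ((n + 1).choose k : ℂ)) • (χ ^ (n + 1 - k) * pd^[j] (χ ^ k)) = 0
    rw [show n + 1 + 1 = n + 2 from rfl, step1, step2, step3, sub_self]

/-- The key combinatorial identity behind the Lagrange reversion formula:
`Σ_{k=0}^{n} (−1)^k C(n,k) χ^{n−k} ∂^{n−1}(χ^k ψ) = 0` for every `n ≥ 1`. -/
theorem stmt_14 (χ ψ : PowerSeries ℂ) (n : ℕ) (hn : 1 ≤ n) :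
    ∑ k ∈ Finset.range (n + 1),
        ((-1 : ℂ) ^ k * (n.choose k : ℂ)) • (χ ^ (n - k) * pd^[n - 1] (χ ^ k * ψ)) = 0 := by
  calc ∑ k ∈ Finset.range (n + 1),
          ((-1 : ℂ) ^ k * (n.choose k : ℂ)) • (χ ^ (n - k) * pd^[n - 1] (χ ^ k * ψ))
      = ∑ k ∈ Finset.range (n + 1), ∑ i ∈ Finset.range (n - 1 + 1),
          ((n - 1).choose i : ℂ) •
            ((((-1 : ℂ) ^ k * (n.choose k : ℂ)) • (χ ^ (n - k) * pd^[i] (χ ^ k))) *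
              pd^[n - 1 - i] ψ) := by
        refine Finset.sum_congr rfl fun k _ => ?_
        rw [pd_iter_mul, Finset.mul_sum, Finset.smul_sum]
        exact Finset.sum_congr rfl fun i _ => swap_pt2 _ _ _ _ _
    _ = ∑ i ∈ Finset.range (n - 1 + 1),
          ((n - 1).choose i : ℂ) •
            ((∑ k ∈ Finset.range (n + 1),
                ((-1 : ℂ) ^ k * (n.choose k : ℂ)) • (χ ^ (n - k) * pd^[i] (χ ^ k))) *
              pd^[n - 1 - i] ψ) := by
        rw [Finset.sum_comm]
        refine Finset.sum_congr rfl fun i _ => ?_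
        rw [Finset.sum_mul, Finset.smul_sum]
    _ = 0 := by
        refine Finset.sum_eq_zero fun i hi => ?_
        have hilt : i < n := by
          have := Finset.mem_range.mp hi; omega
        rw [key χ n i hilt, zero_mul, smul_zero]
end

section
/- Let Δ ⊆ ℂ be a nonempty open set which is star-shaped with respect to 0, i.e. for every ζ ∈ Δ the segment [0,ζ] is contained in Δ. If φ̂ and ψ̂ are holomorphic on Δ, then the function ζ ↦ ∫₀^1 ζ·φ̂(sζ)·ψ̂((1−s)ζ) ds is holomorphic on Δ. -/
open MeasureTheory

/-- If `Δ ⊆ ℂ` is a nonempty open set star-shaped with respect to `0` and `φ̂`, `ψ̂` are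
holomorphic on `Δ`, then their convolution `ζ ↦ ∫₀¹ ζ φ̂(sζ) ψ̂((1−s)ζ) ds` is
holomorphic on `Δ`. -/
theorem stmt_17 (Δ : Set ℂ) (hne : Δ.Nonempty) (hopen : IsOpen Δ)
    (hstar : ∀ ζ ∈ Δ, segment ℝ (0 : ℂ) ζ ⊆ Δ) (φ ψ : ℂ → ℂ)
    (hφ : DifferentiableOn ℂ φ Δ) (hψ : DifferentiableOn ℂ ψ Δ) :
    DifferentiableOn ℂ
      (fun ζ : ℂ => ∫ s in (0:ℝ)..1, ζ * φ ((s : ℂ) * ζ) * ψ ((1 - (s : ℂ)) * ζ)) Δ := by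
  -- continuity of `φ, ψ` and of their (complex) derivatives on `Δ`
  have hφ' : DifferentiableOn ℂ (deriv φ) Δ :=
    ((hφ.analyticOnNhd hopen).deriv).differentiableOn
  have hψ' : DifferentiableOn ℂ (deriv ψ) Δ :=
    ((hψ.analyticOnNhd hopen).deriv).differentiableOn
  intro ζ₀ hζ₀
  -- pick a closed ball around `ζ₀` inside `Δ`
  obtain ⟨ε, εpos, hball⟩ :=
    (Metric.nhds_basis_closedBall.mem_iff).1 (hopen.mem_nhds hζ₀)
  -- basic continuity facts
  have hcont1 : ∀ x : ℂ, Continuous fun t : ℝ => (t : ℂ) * x := fun x =>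
    Complex.continuous_ofReal.mul continuous_const
  have hcont2 : ∀ x : ℂ, Continuous fun t : ℝ => (1 - (t : ℂ)) * x := fun x =>
    (continuous_const.sub Complex.continuous_ofReal).mul continuous_const
  -- the compact set of all relevant points
  set K : Set ℂ :=
    (fun p : ℝ × ℂ => (p.1 : ℂ) * p.2) '' (Set.Icc (0:ℝ) 1 ×ˢ Metric.closedBall ζ₀ ε) with hKdef
  have hKc : IsCompact K :=
    (isCompact_Icc.prod (isCompact_closedBall ζ₀ ε)).image
      ((Complex.continuous_ofReal.comp continuous_fst).mul continuous_snd)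
  have hKΔ : K ⊆ Δ := by
    rintro z ⟨⟨s, x⟩, ⟨hs, hx⟩, rfl⟩
    have hxΔ : x ∈ Δ := hball hx
    have : (s : ℂ) * x ∈ segment ℝ (0 : ℂ) x := by
      rw [segment_eq_image]
      exact ⟨s, hs, by simp [Complex.real_smul]⟩
    exact hstar x hxΔ this
  have memK : ∀ s ∈ Set.Icc (0:ℝ) 1, ∀ x ∈ Metric.closedBall ζ₀ ε, (s : ℂ) * x ∈ K := by
    intro s hs x hx
    exact ⟨⟨s, x⟩, ⟨hs, hx⟩, rfl⟩
  have mem1K : ∀ s ∈ Set.Icc (0:ℝ) 1, ∀ x ∈ Metric.closedBall ζ₀ ε,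
      (1 - (s : ℂ)) * x ∈ K := by
    intro s hs x hx
    have h1s : (1 - s) ∈ Set.Icc (0:ℝ) 1 := ⟨by linarith [hs.2], by linarith [hs.1]⟩
    have := memK (1 - s) h1s x hx
    simpa using this
  -- composed continuity
  have ccomp : ∀ f : ℂ → ℂ, ContinuousOn f Δ → ∀ x ∈ Metric.closedBall ζ₀ ε,
      ContinuousOn (fun t : ℝ => f ((t : ℂ) * x)) (Set.Icc 0 1) := by
    intro f hf x hx
    exact (hf.mono hKΔ).comp (hcont1 x).continuousOn (fun t ht => memK t ht x hx)
  have ccomp2 : ∀ f : ℂ → ℂ, ContinuousOn f Δ → ∀ x ∈ Metric.closedBall ζ₀ ε,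
      ContinuousOn (fun t : ℝ => f ((1 - (t : ℂ)) * x)) (Set.Icc 0 1) := by
    intro f hf x hx
    exact (hf.mono hKΔ).comp (hcont2 x).continuousOn (fun t ht => mem1K t ht x hx)
  -- bounds on the compact set
  obtain ⟨Cφ, hCφ⟩ := hKc.exists_bound_of_continuousOn (hφ.continuousOn.mono hKΔ)
  obtain ⟨Cψ, hCψ⟩ := hKc.exists_bound_of_continuousOn (hψ.continuousOn.mono hKΔ)
  obtain ⟨Cφ', hCφ'⟩ := hKc.exists_bound_of_continuousOn (hφ'.continuousOn.mono hKΔ)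
  obtain ⟨Cψ', hCψ'⟩ := hKc.exists_bound_of_continuousOn (hψ'.continuousOn.mono hKΔ)
  have hζ₀K : (0:ℂ) * ζ₀ ∈ K := memK 0 (by norm_num) ζ₀ (by simp [εpos.le])
  have hCφ0 : 0 ≤ Cφ := le_trans (norm_nonneg _) (hCφ _ hζ₀K)
  have hCψ0 : 0 ≤ Cψ := le_trans (norm_nonneg _) (hCψ _ hζ₀K)
  have hCφ'0 : 0 ≤ Cφ' := le_trans (norm_nonneg _) (hCφ' _ hζ₀K)
  have hCψ'0 : 0 ≤ Cψ' := le_trans (norm_nonneg _) (hCψ' _ hζ₀K)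
  set R : ℝ := ‖ζ₀‖ + ε with hRdef
  have hR0 : 0 ≤ R := by positivity
  have hxle : ∀ x ∈ Metric.closedBall ζ₀ ε, ‖x‖ ≤ R := by
    intro x hx
    have := mem_closedBall_iff_norm.1 hx
    calc ‖x‖ ≤ ‖x - ζ₀‖ + ‖ζ₀‖ := by
          simpa using norm_add_le (x - ζ₀) ζ₀
      _ ≤ ε + ‖ζ₀‖ := by linarith
      _ = R := by ring
  -- the integrand and its derivative in the parameter
  set F : ℂ → ℝ → ℂ := fun x t => x * φ ((t : ℂ) * x) * ψ ((1 - (t : ℂ)) * x) with hFdef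
  set F' : ℂ → ℝ → ℂ := fun x t =>
      (1 * φ ((t : ℂ) * x) + x * (deriv φ ((t : ℂ) * x) * (t : ℂ))) * ψ ((1 - (t : ℂ)) * x)
        + x * φ ((t : ℂ) * x) * (deriv ψ ((1 - (t : ℂ)) * x) * (-(t : ℂ) + 1)) with hF'def
  have hζ₀' : ζ₀ ∈ Metric.closedBall ζ₀ ε := by simp [εpos.le]
  have hsub : Set.uIoc (0:ℝ) 1 ⊆ Set.Icc 0 1 := by
    rw [Set.uIoc_of_le zero_le_one]; exact Set.Ioc_subset_Icc_self
  -- apply the dominated differentiation theorem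
  have main := intervalIntegral.hasDerivAt_integral_of_dominated_loc_of_deriv_le
    (F := F) (F' := F') (x₀ := ζ₀) (a := 0) (b := 1) (μ := volume)
    (bound := fun _ => (Cφ + R * Cφ') * Cψ + R * Cφ * Cψ') (Metric.ball_mem_nhds ζ₀ εpos)
    ?_ ?_ ?_ ?_ ?_ ?_
  · exact main.2.differentiableAt.differentiableWithinAt
  · -- measurability of `F x` near `ζ₀`
    filter_upwards [Metric.closedBall_mem_nhds ζ₀ εpos] with x hx
    apply ContinuousOn.aestronglyMeasurable _ measurableSet_uIoc
    apply ContinuousOn.mono _ hsub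
    exact (continuousOn_const.mul (ccomp φ hφ.continuousOn x hx)).mul
      (ccomp2 ψ hψ.continuousOn x hx)
  · -- integrability of `F ζ₀`
    apply ContinuousOn.intervalIntegrable
    rw [Set.uIcc_of_le zero_le_one]
    exact (continuousOn_const.mul (ccomp φ hφ.continuousOn ζ₀ hζ₀')).mul
      (ccomp2 ψ hψ.continuousOn ζ₀ hζ₀')
  · -- measurability of `F' ζ₀`
    apply ContinuousOn.aestronglyMeasurable _ measurableSet_uIoc
    apply ContinuousOn.mono _ hsub
    have c1 := ccomp φ hφ.continuousOn ζ₀ hζ₀'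
    have c2 := ccomp2 ψ hψ.continuousOn ζ₀ hζ₀'
    have c3 := ccomp (deriv φ) hφ'.continuousOn ζ₀ hζ₀'
    have c4 := ccomp2 (deriv ψ) hψ'.continuousOn ζ₀ hζ₀'
    have c5 : ContinuousOn (fun t : ℝ => (t : ℂ)) (Set.Icc 0 1) :=
      Complex.continuous_ofReal.continuousOn
    have c6 : ContinuousOn (fun t : ℝ => -(t : ℂ) + 1) (Set.Icc 0 1) :=
      ((Complex.continuous_ofReal.neg).add continuous_const).continuousOn
    exact (((continuousOn_const.mul c1).add
        (continuousOn_const.mul (c3.mul c5))).mul c2).add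
      ((continuousOn_const.mul c1).mul (c4.mul c6))
  · -- the bound
    refine Filter.Eventually.of_forall fun t ht x hx => ?_
    have ht' : t ∈ Set.Icc (0:ℝ) 1 := hsub ht
    have hx' : x ∈ Metric.closedBall ζ₀ ε := Metric.ball_subset_closedBall hx
    have h1 : ‖φ ((t : ℂ) * x)‖ ≤ Cφ := hCφ _ (memK t ht' x hx')
    have h2 : ‖ψ ((1 - (t : ℂ)) * x)‖ ≤ Cψ := hCψ _ (mem1K t ht' x hx')
    have h3 : ‖deriv φ ((t : ℂ) * x)‖ ≤ Cφ' := hCφ' _ (memK t ht' x hx')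
    have h4 : ‖deriv ψ ((1 - (t : ℂ)) * x)‖ ≤ Cψ' := hCψ' _ (mem1K t ht' x hx')
    have hxR : ‖x‖ ≤ R := hxle x hx'
    have htle : ‖(t : ℂ)‖ ≤ 1 := by
      rw [Complex.norm_real, Real.norm_eq_abs, abs_of_nonneg ht'.1]
      exact ht'.2
    have ht1le : ‖(-(t : ℂ) + 1)‖ ≤ 1 := by
      have he : (-(t : ℂ) + 1) = ((1 - t : ℝ) : ℂ) := by push_cast; ring
      rw [he, Complex.norm_real, Real.norm_eq_abs, abs_of_nonneg (by linarith [ht'.2])]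
      linarith [ht'.1]
    have eA : ‖1 * φ ((t : ℂ) * x) + x * (deriv φ ((t : ℂ) * x) * (t : ℂ))‖
        ≤ Cφ + R * Cφ' := by
      refine (norm_add_le _ _).trans (add_le_add ?_ ?_)
      · rw [one_mul]; exact h1
      · rw [norm_mul, norm_mul]
        have hb : ‖deriv φ ((t : ℂ) * x)‖ * ‖(t : ℂ)‖ ≤ Cφ' * 1 :=
          mul_le_mul h3 htle (norm_nonneg _) hCφ'0
        calc ‖x‖ * (‖deriv φ ((t : ℂ) * x)‖ * ‖(t : ℂ)‖)
            ≤ R * (Cφ' * 1) := mul_le_mul hxR hb (by positivity) hR0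
          _ = R * Cφ' := by ring
    have eB : ‖x * φ ((t : ℂ) * x) * (deriv ψ ((1 - (t : ℂ)) * x) * (-(t : ℂ) + 1))‖
        ≤ R * Cφ * Cψ' := by
      rw [norm_mul, norm_mul, norm_mul]
      have hb1 : ‖x‖ * ‖φ ((t : ℂ) * x)‖ ≤ R * Cφ :=
        mul_le_mul hxR h1 (norm_nonneg _) hR0
      have hb2 : ‖deriv ψ ((1 - (t : ℂ)) * x)‖ * ‖(-(t : ℂ) + 1)‖ ≤ Cψ' * 1 :=
        mul_le_mul h4 ht1le (norm_nonneg _) hCψ'0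
      calc ‖x‖ * ‖φ ((t : ℂ) * x)‖ * (‖deriv ψ ((1 - (t : ℂ)) * x)‖ * ‖(-(t : ℂ) + 1)‖)
          ≤ R * Cφ * (Cψ' * 1) := mul_le_mul hb1 hb2 (by positivity) (by positivity)
        _ = R * Cφ * Cψ' := by ring
    calc ‖F' x t‖
        ≤ ‖(1 * φ ((t : ℂ) * x) + x * (deriv φ ((t : ℂ) * x) * (t : ℂ)))
              * ψ ((1 - (t : ℂ)) * x)‖
          + ‖x * φ ((t : ℂ) * x) * (deriv ψ ((1 - (t : ℂ)) * x) * (-(t : ℂ) + 1))‖ :=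
          norm_add_le _ _
      _ ≤ (Cφ + R * Cφ') * Cψ + R * Cφ * Cψ' := by
          refine add_le_add ?_ eB
          rw [norm_mul]
          exact mul_le_mul eA h2 (norm_nonneg _) (by positivity)
  · exact intervalIntegrable_const
  · -- differentiability
    refine Filter.Eventually.of_forall fun t ht x hx => ?_
    have ht' : t ∈ Set.Icc (0:ℝ) 1 := hsub ht
    have hx' : x ∈ Metric.closedBall ζ₀ ε := Metric.ball_subset_closedBall hx
    have h1 : HasDerivAt (fun y : ℂ => (t : ℂ) * y) (t : ℂ) x := by
      simpa using (hasDerivAt_id x).const_mul (t : ℂ)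
    have h2 : HasDerivAt (fun y : ℂ => (1 - (t : ℂ)) * y) (-(t : ℂ) + 1) x := by
      have := (hasDerivAt_id x).const_mul (1 - (t : ℂ))
      simpa [sub_eq_add_neg, add_comm] using this
    have hφat : HasDerivAt φ (deriv φ ((t : ℂ) * x)) ((t : ℂ) * x) :=
      (hφ.differentiableAt (hopen.mem_nhds (hKΔ (memK t ht' x hx')))).hasDerivAt
    have hψat : HasDerivAt ψ (deriv ψ ((1 - (t : ℂ)) * x)) ((1 - (t : ℂ)) * x) :=
      (hψ.differentiableAt (hopen.mem_nhds (hKΔ (mem1K t ht' x hx')))).hasDerivAt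
    have hg2 : HasDerivAt (fun y : ℂ => φ ((t : ℂ) * y)) (deriv φ ((t : ℂ) * x) * (t : ℂ)) x :=
      hφat.comp x h1
    have hg3 : HasDerivAt (fun y : ℂ => ψ ((1 - (t : ℂ)) * y))
        (deriv ψ ((1 - (t : ℂ)) * x) * (-(t : ℂ) + 1)) x := hψat.comp x h2
    exact ((hasDerivAt_id x).mul hg2).mul hg3
end

section
/- Let Ω ⊆ ℂ be nonempty, closed and discrete (every point of Ω is isolated), with 0 ∈ Ω and ω + ω' ∈ Ω for all ω, ω' ∈ Ω. Let γ : [0,1] → ℂ∖Ω be a continuous, piecewise continuously differentiable path with γ(0) ≠ 0 and |γ(0)| < |ω| for every ω ∈ Ω∖{0}. Then there exists a continuous map H : [0,1]×[0,1] → ℂ such that for all s, t ∈ [0,1]: (i) H(0,t) = 0; (ii) H(s,t) ∉ Ω whenever s > 0; (iii) H(1,t) − H(s,t) = H(1−s,t); (iv) H(1,t) = γ(t); and (v) H(s,0) = s·γ(0). -/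
open Metric Set

/-- Existence of symmetric `Ω`-homotopies: if `Ω ⊆ ℂ` is nonempty, closed, discrete,
contains `0` and is stable under addition, then every (piecewise `C¹`) path
`γ : [0,1] → ℂ∖Ω` starting at a nonzero point closer to `0` than every point of
`Ω∖{0}` is the endpoint path of a symmetric `Ω`-homotopy whose initial path is the
segment `s ↦ s·γ(0)`. -/
theorem stmt_19 (Ω : Set ℂ) (hne : Ω.Nonempty) (hclosed : IsClosed Ω)
    (hdisc : ∀ ω ∈ Ω, ∃ ε : ℝ, 0 < ε ∧ ∀ ω' ∈ Ω, dist ω' ω < ε → ω' = ω)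
    (h0 : (0 : ℂ) ∈ Ω) (hadd : ∀ ω ∈ Ω, ∀ ω' ∈ Ω, ω + ω' ∈ Ω)
    (γ : ℝ → ℂ) (hγcont : ContinuousOn γ (Set.Icc 0 1))
    (hγpc : ∃ n : ℕ, ∃ t : ℕ → ℝ, t 0 = 0 ∧ t n = 1 ∧ (∀ i < n, t i < t (i + 1)) ∧
      ∀ i < n, ContDiffOn ℝ 1 γ (Set.Icc (t i) (t (i + 1))))
    (hγΩ : ∀ u ∈ Set.Icc (0:ℝ) 1, γ u ∉ Ω)
    (hγ0 : γ 0 ≠ 0) (hsmall : ∀ ω ∈ Ω, ω ≠ 0 → ‖γ 0‖ < ‖ω‖) :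
    ∃ H : ℝ → ℝ → ℂ,
      ContinuousOn (fun p : ℝ × ℝ => H p.1 p.2) ((Set.Icc (0:ℝ) 1) ×ˢ (Set.Icc (0:ℝ) 1)) ∧
      (∀ u ∈ Set.Icc (0:ℝ) 1, H 0 u = 0) ∧
      (∀ s ∈ Set.Icc (0:ℝ) 1, ∀ u ∈ Set.Icc (0:ℝ) 1, 0 < s → H s u ∉ Ω) ∧
      (∀ s ∈ Set.Icc (0:ℝ) 1, ∀ u ∈ Set.Icc (0:ℝ) 1, H 1 u - H s u = H (1 - s) u) ∧
      (∀ u ∈ Set.Icc (0:ℝ) 1, H 1 u = γ u) ∧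
      (∀ s ∈ Set.Icc (0:ℝ) 1, H s 0 = (s : ℂ) * γ 0) := by
  classical
  -- the distance from the path to Ω is positive
  have hnot : ∀ t ∈ Icc (0:ℝ) 1, 0 < infDist (γ t) Ω := fun t ht =>
    (hclosed.notMem_iff_infDist_pos hne).mp (hγΩ t ht)
  obtain ⟨t₀, ht₀, hmin⟩ := isCompact_Icc.exists_isMinOn (nonempty_Icc.mpr zero_le_one)
    ((continuous_infDist_pt Ω).comp_continuousOn hγcont)
  set δ : ℝ := infDist (γ t₀) Ω with hδdef
  have hδpos : 0 < δ := hnot t₀ ht₀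
  have hδ : ∀ t ∈ Icc (0:ℝ) 1, δ ≤ infDist (γ t) Ω := fun t ht => hmin ht
  -- uniform continuity of γ, pick the grid size
  obtain ⟨d, hdpos, hunif⟩ := Metric.uniformContinuousOn_iff.mp
    (isCompact_Icc.uniformContinuousOn_of_continuous hγcont) δ hδpos
  obtain ⟨n, hn⟩ := exists_nat_one_div_lt hdpos
  set N : ℕ := n + 1 with hNdef
  have hNpos : 0 < (N:ℝ) := by positivity
  have h1N : 1/(N:ℝ) < d := by push_cast [hNdef]; exact_mod_cast hn
  -- subadditivity of infDist with respect to Ω + Ω ⊆ Ω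
  have lemA : ∀ w z : ℂ, infDist w Ω ≤ infDist z Ω + infDist (w - z) Ω := by
    intro w z
    refine le_of_forall_pos_le_add fun ε hε => ?_
    obtain ⟨ω, hω, hd1⟩ := (infDist_lt_iff hne).mp
      (show infDist z Ω < infDist z Ω + ε/2 by linarith)
    obtain ⟨ω', hω', hd2⟩ := (infDist_lt_iff hne).mp
      (show infDist (w - z) Ω < infDist (w - z) Ω + ε/2 by linarith)
    have hmem : ω + ω' ∈ Ω := hadd ω hω ω' hω'
    have h1 : infDist w Ω ≤ dist w (ω + ω') := infDist_le_dist_of_mem hmem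
    have h2 : dist w (ω + ω') ≤ dist z ω + dist (w - z) ω' := by
      simp only [dist_eq_norm]
      calc ‖w - (ω + ω')‖ = ‖(z - ω) + ((w - z) - ω')‖ := by ring_nf
        _ ≤ ‖z - ω‖ + ‖(w - z) - ω'‖ := norm_add_le _ _
    linarith
  -- the main induction
  have key : ∀ j : ℕ, j ≤ N → ∃ H : ℝ → ℝ → ℂ,
      ContinuousOn (fun p : ℝ × ℝ => H p.1 p.2) (Icc (0:ℝ) 1 ×ˢ Icc (0:ℝ) ((j:ℝ)/N)) ∧
      (∀ u ∈ Icc (0:ℝ) ((j:ℝ)/N), H 0 u = 0) ∧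
      (∀ s ∈ Icc (0:ℝ) 1, ∀ u ∈ Icc (0:ℝ) ((j:ℝ)/N), 0 < s → H s u ∉ Ω) ∧
      (∀ s ∈ Icc (0:ℝ) 1, ∀ u ∈ Icc (0:ℝ) ((j:ℝ)/N), H 1 u - H s u = H (1 - s) u) ∧
      (∀ u ∈ Icc (0:ℝ) ((j:ℝ)/N), H 1 u = γ u) ∧
      (∀ s ∈ Icc (0:ℝ) 1, H s 0 = (s : ℂ) * γ 0) := by
    intro j
    induction j with
    | zero =>
      intro _
      refine ⟨fun s _ => (s:ℂ) * γ 0, ?_, ?_, ?_, ?_, ?_, ?_⟩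
      · exact (Continuous.continuousOn (by continuity))
      · intro u hu; norm_num
      · intro s hs u hu hspos
        simp only [Nat.cast_zero, zero_div, Icc_self, mem_singleton_iff] at hu
        intro hmem
        have hne0 : (s:ℂ) * γ 0 ≠ 0 := by
          exact mul_ne_zero (by exact_mod_cast ne_of_gt hspos) hγ0
        have := hsmall _ hmem hne0
        have hb : ‖(s:ℂ) * γ 0‖ ≤ ‖γ 0‖ := by
          rw [norm_mul, Complex.norm_real, Real.norm_eq_abs, abs_of_pos hspos]
          nlinarith [norm_nonneg (γ 0), hs.2, hspos]
        simp only at this hmem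
        linarith
      · intro s hs u hu; dsimp only; push_cast; ring
      · intro u hu
        simp only [Nat.cast_zero, zero_div, Icc_self, mem_singleton_iff] at hu
        subst hu; norm_num
      · intro s hs; rfl
    | succ j ih =>
      intro hjN
      obtain ⟨H, Hcont, P1, P2, P3, P4, P5⟩ := ih (Nat.le_of_succ_le hjN)
      set tj : ℝ := (j:ℝ)/N with htjdef
      have htj0 : 0 ≤ tj := by positivity
      have htj1 : tj ≤ 1 := by
        rw [htjdef, div_le_one hNpos]
        exact_mod_cast Nat.le_of_succ_le hjN
      have htjmem : tj ∈ Icc (0:ℝ) 1 := ⟨htj0, htj1⟩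
      have htjself : tj ∈ Icc (0:ℝ) tj := ⟨htj0, le_refl tj⟩
      set a : ℂ := γ tj with hadef
      have haΩ : a ∉ Ω := hγΩ tj htjmem
      have hfa : 0 < infDist a Ω := hnot tj htjmem
      have hf0 : infDist (0:ℂ) Ω = 0 := infDist_zero_of_mem h0
      -- denominator bound
      have hD : ∀ z : ℂ, δ ≤ infDist z Ω + infDist (a - z) Ω :=
        fun z => le_trans (hδ tj htjmem) (lemA a z)
      have hDpos : ∀ z : ℂ, 0 < infDist z Ω + infDist (a - z) Ω :=
        fun z => lt_of_lt_of_le hδpos (hD z)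
      set Θ : ℂ → ℝ := fun z => infDist z Ω / (infDist z Ω + infDist (a - z) Ω) with hΘdef
      have hΘcont : Continuous Θ := by
        apply Continuous.div
        · exact continuous_infDist_pt Ω
        · exact (continuous_infDist_pt Ω).add
            ((continuous_infDist_pt Ω).comp (continuous_const.sub continuous_id))
        · exact fun z => ne_of_gt (hDpos z)
      have hΘ0 : Θ 0 = 0 := by simp [hΘdef, hf0]
      have hΘa : Θ a = 1 := by
        simp only [hΘdef, sub_self, hf0, add_zero]
        exact div_self (ne_of_gt hfa)
      have hΘsym : ∀ z, Θ (a - z) = 1 - Θ z := by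
        intro z
        have h1 : a - (a - z) = z := by ring
        have h2 : infDist z Ω + infDist (a - z) Ω ≠ 0 := ne_of_gt (hDpos z)
        rw [hΘdef]
        simp only [h1]
        rw [add_comm (infDist (a - z) Ω), eq_sub_iff_add_eq, ← add_div,
          add_comm (infDist (a - z) Ω), div_self h2]
      have hΘnonneg : ∀ z, 0 ≤ Θ z :=
        fun z => div_nonneg infDist_nonneg (le_of_lt (hDpos z))
      have hΘle : ∀ z, Θ z ≤ infDist z Ω / δ := by
        intro z
        apply div_le_div_of_nonneg_left infDist_nonneg hδpos (hD z)
      -- the new homotopy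
      refine ⟨fun s t => H s (min t tj) + (Θ (H s tj) : ℂ) * (γ (max t tj) - a),
        ?_, ?_, ?_, ?_, ?_, ?_⟩
      · -- continuity
        have hmap1 : ∀ p : ℝ × ℝ, p ∈ Icc (0:ℝ) 1 ×ˢ Icc (0:ℝ) (((j:ℝ)+1)/N) →
            (p.1, min p.2 tj) ∈ Icc (0:ℝ) 1 ×ˢ Icc (0:ℝ) tj := by
          intro p hp
          exact ⟨hp.1, ⟨le_min hp.2.1 htj0, min_le_right _ _⟩⟩
        have hmap2 : ∀ p : ℝ × ℝ, p ∈ Icc (0:ℝ) 1 ×ˢ Icc (0:ℝ) (((j:ℝ)+1)/N) →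
            max p.2 tj ∈ Icc (0:ℝ) 1 := by
          intro p hp
          refine ⟨le_max_of_le_right htj0, max_le ?_ htj1⟩
          calc p.2 ≤ ((j:ℝ)+1)/N := hp.2.2
            _ ≤ 1 := by
                rw [div_le_one hNpos]; exact_mod_cast hjN
        have m1 : Continuous (fun p : ℝ × ℝ => (p.1, min p.2 tj)) := by fun_prop
        have m2 : Continuous (fun p : ℝ × ℝ => (p.1, tj)) := by fun_prop
        have m3 : Continuous (fun p : ℝ × ℝ => max p.2 tj) := by fun_prop
        have hc1 : ContinuousOn (fun p : ℝ × ℝ => H p.1 (min p.2 tj))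
            (Icc (0:ℝ) 1 ×ˢ Icc (0:ℝ) (((j:ℝ)+1)/N)) :=
          Hcont.comp m1.continuousOn hmap1
        have hc2 : ContinuousOn (fun p : ℝ × ℝ => H p.1 tj)
            (Icc (0:ℝ) 1 ×ˢ Icc (0:ℝ) (((j:ℝ)+1)/N)) :=
          Hcont.comp m2.continuousOn (fun p hp => ⟨hp.1, htjself⟩)
        have hc3 : ContinuousOn (fun p : ℝ × ℝ => γ (max p.2 tj))
            (Icc (0:ℝ) 1 ×ˢ Icc (0:ℝ) (((j:ℝ)+1)/N)) :=
          hγcont.comp m3.continuousOn hmap2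
        have : ((((j:ℕ)+1:ℕ)):ℝ) = (j:ℝ)+1 := by push_cast; ring
        rw [this]
        exact hc1.add ((Complex.continuous_ofReal.comp_continuousOn
          (hΘcont.comp_continuousOn hc2)).mul (hc3.sub continuousOn_const))
      · -- H 0 u = 0
        intro u hu
        dsimp only
        have h1 : H 0 (min u tj) = 0 := P1 _ ⟨le_min hu.1 htj0, min_le_right _ _⟩
        have h2 : H 0 tj = 0 := P1 tj htjself
        rw [h1, h2, hΘ0]
        simp
      · -- avoids Ω
        intro s hs u hu hspos
        dsimp only
        have hz : H s tj ∉ Ω := P2 s hs tj htjself hspos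
        rcases le_total u tj with hle | hge
        · rw [min_eq_left hle, max_eq_right hle]
          simpa [hadef] using P2 s hs u ⟨hu.1, hle⟩ hspos
        · rw [min_eq_right hge, max_eq_left hge]
          set z : ℂ := H s tj with hzdef
          have hfz : 0 < infDist z Ω := (hclosed.notMem_iff_infDist_pos hne).mp hz
          have humem : u ∈ Icc (0:ℝ) 1 := by
            refine ⟨hu.1, ?_⟩
            calc u ≤ ((j:ℝ)+1)/N := by exact_mod_cast hu.2
              _ ≤ 1 := by rw [div_le_one hNpos]; exact_mod_cast hjN
          have hΔ : ‖γ u - a‖ < δ := by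
            have hdist : dist u tj < d := by
              rw [Real.dist_eq, abs_of_nonneg (by linarith)]
              have : u - tj ≤ 1/(N:ℝ) := by
                have h2 : u ≤ ((j:ℝ)+1)/N := by exact_mod_cast hu.2
                rw [htjdef]
                have : ((j:ℝ)+1)/N - (j:ℝ)/N = 1/N := by ring
                linarith
              linarith
            have := hunif u humem tj htjmem hdist
            rwa [dist_eq_norm] at this
          intro hmem
          have hinf : infDist z Ω ≤ dist z (z + (Θ z : ℂ) * (γ u - a)) :=
            infDist_le_dist_of_mem hmem
          have hdd : dist z (z + (Θ z : ℂ) * (γ u - a)) = Θ z * ‖γ u - a‖ := by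
            rw [dist_eq_norm]
            have : z - (z + (Θ z : ℂ) * (γ u - a)) = -((Θ z : ℂ) * (γ u - a)) := by ring
            rw [this, norm_neg, norm_mul, Complex.norm_real, Real.norm_eq_abs,
              abs_of_nonneg (hΘnonneg z)]
          have hlt : Θ z * ‖γ u - a‖ < infDist z Ω := by
            calc Θ z * ‖γ u - a‖ ≤ (infDist z Ω / δ) * ‖γ u - a‖ :=
                mul_le_mul_of_nonneg_right (hΘle z) (norm_nonneg _)
              _ < (infDist z Ω / δ) * δ :=
                mul_lt_mul_of_pos_left hΔ (div_pos hfz hδpos)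
              _ = infDist z Ω := by field_simp
          rw [hdd] at hinf
          linarith
      · -- symmetry
        intro s hs u hu
        have hs' : 1 - s ∈ Icc (0:ℝ) 1 := ⟨by linarith [hs.2], by linarith [hs.1]⟩
        have hmmem : min u tj ∈ Icc (0:ℝ) tj := ⟨le_min hu.1 htj0, min_le_right _ _⟩
        have e1 : H 1 (min u tj) - H s (min u tj) = H (1-s) (min u tj) :=
          P3 s hs _ hmmem
        have e2 : H 1 tj - H s tj = H (1-s) tj := P3 s hs tj htjself
        have e3 : H 1 tj = a := P4 tj htjself
        have e4 : H (1-s) tj = a - H s tj := by rw [← e2, e3]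
        have e5 : Θ (H (1-s) tj) = 1 - Θ (H s tj) := by rw [e4, hΘsym]
        dsimp only
        rw [e3, hΘa, e5, ← e1]
        push_cast
        ring
      · -- endpoint
        intro u hu
        dsimp only
        have h1 : H 1 (min u tj) = γ (min u tj) :=
          P4 _ ⟨le_min hu.1 htj0, min_le_right _ _⟩
        have h2 : H 1 tj = a := P4 tj htjself
        rw [h1, h2, hΘa]
        rcases le_total u tj with hle | hge
        · rw [min_eq_left hle, max_eq_right hle]; simp [hadef]
        · rw [min_eq_right hge, max_eq_left hge]; simp [hadef]
      · -- initial segment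
        intro s hs
        dsimp only
        rw [min_eq_left htj0, max_eq_right htj0]
        simp [P5 s hs, hadef]
  obtain ⟨H, hc, h1, h2, h3, h4, h5⟩ := key N le_rfl
  have hNN : ((N:ℕ):ℝ)/N = 1 := div_self (ne_of_gt hNpos)
  rw [hNN] at hc h1 h2 h3 h4
  exact ⟨H, hc, h1, h2, h3, h4, h5⟩
end
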